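/- Closed form of the Nikaido–Isoda error: Let f be continuous on 𝕋^n × 𝕋^n and let μ, ν ∈ 𝒫(𝕋^n) be absolutely continuous with H(μ) < ∞ and H(ν) < ∞. Then NI(μ,ν) = H(μ) + H(ν) + log ∫_{𝕋^n} e^{U_μ(y)} dy + log ∫_{𝕋^n} e^{−V_ν(x)} dx, where U_μ(y) = ∫ f(x,y) dμ(x) and V_ν(x) = ∫ f(x,y) dν(y). -/

import Mathlib

open MeasureTheory

theorem Real.fact_zero_lt_one : Fact ((0 : ℝ) < 1) :=
  ⟨zero_lt_one⟩

attribute [local instance] Real.fact_zero_lt_one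

/-- The flat torus `ℝⁿ/ℤⁿ`, modeled as a product of circles of length `1`, equipped with
its (probability) Haar/Lebesgue measure `volume`. -/
abbrev Torus (n : ℕ) := Fin n → AddCircle (1 : ℝ)

/-- The density of a measure on the torus with respect to the Lebesgue (probability) measure. -/
noncomputable def density {n : ℕ} (ν : Measure (Torus n)) : Torus n → ℝ :=
  fun x => (ν.rnDeriv volume x).toReal

/-- A measure has finite entropy `H(ν) = ∫ ρ log ρ dx < ∞` iff it is absolutely continuous with
respect to Lebesgue measure and `ρ log ρ` is integrable. -/
def entAdmissible {n : ℕ} (ν : Measure (Torus n)) : Prop :=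
  ν ≪ (volume : Measure (Torus n)) ∧
    Integrable (fun x => density ν x * Real.log (density ν x)) (volume : Measure (Torus n))

/-- The (negative) entropy `H(ν) = ∫ ρ log ρ dx` of an absolutely continuous measure. -/
noncomputable def Hent {n : ℕ} (ν : Measure (Torus n)) : ℝ :=
  ∫ x, density ν x * Real.log (density ν x)

open Classical in
/-- The payoff functional `F(μ,ν) = ∬ f dμ dν + H(μ) − H(ν)`, as an extended real number:
it equals `−∞ = ⊥` when `H(ν) = +∞` (and `H(μ) < ∞`), and `+∞ = ⊤` when `H(μ) = +∞`. -/
noncomputable def Fval {n : ℕ} (f : Torus n → Torus n → ℝ) (μ ν : Measure (Torus n)) : EReal :=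
  if entAdmissible μ then
    (if entAdmissible ν then (((∫ x, ∫ y, f x y ∂ν ∂μ) + Hent μ - Hent ν : ℝ) : EReal) else ⊥)
  else ⊤

/-- The Nikaido–Isoda error `NI(μ,ν) = sup_{ν'} F(μ,ν') − inf_{μ'} F(μ',ν)`, the suprema and
infima being taken over all Borel probability measures on the torus. -/
noncomputable def NIval {n : ℕ} (f : Torus n → Torus n → ℝ) (μ ν : Measure (Torus n)) : EReal :=
  (⨆ ν' ∈ {m : Measure (Torus n) | IsProbabilityMeasure m}, Fval f μ ν')
    - (⨅ μ' ∈ {m : Measure (Torus n) | IsProbabilityMeasure m}, Fval f μ' ν)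

namespace NIaux

instance : IsProbabilityMeasure (volume : Measure (AddCircle (1:ℝ))) :=
  ⟨by rw [AddCircle.measure_univ]; simp⟩

instance (n : ℕ) : IsProbabilityMeasure (volume : Measure (Torus n)) :=
  inferInstanceAs (IsProbabilityMeasure (Measure.pi fun _ => volume))

lemma integrable_of_bdd {α : Type*} [MeasurableSpace α] {m : Measure α} [IsFiniteMeasure m]
    {g : α → ℝ} (hg : AEStronglyMeasurable g m) {C : ℝ} (hb : ∀ x, |g x| ≤ C) :
    Integrable g m :=
  (integrable_const C).mono' hg (ae_of_all _ fun x => by simpa using hb x)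

variable {n : ℕ}

lemma exists_bound (f : Torus n → Torus n → ℝ)
    (hf : Continuous fun p : Torus n × Torus n => f p.1 p.2) :
    ∃ C : ℝ, ∀ x y, |f x y| ≤ C := by
  obtain ⟨p0, -, hp0⟩ := isCompact_univ.exists_isMaxOn Set.univ_nonempty
    ((continuous_abs.comp hf).continuousOn)
  exact ⟨|f p0.1 p0.2|, fun x y => hp0 (Set.mem_univ (x, y))⟩

lemma exp_int (W : Torus n → ℝ) (hWm : Measurable W) (C : ℝ) (hWb : ∀ x, |W x| ≤ C) :
    Integrable (fun x => Real.exp (W x)) (volume : Measure (Torus n)) := by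
  refine integrable_of_bdd (Real.measurable_exp.comp hWm).aestronglyMeasurable
    (C := Real.exp C) (fun x => ?_)
  rw [abs_of_pos (Real.exp_pos _)]
  exact Real.exp_le_exp.mpr ((abs_le.1 (hWb x)).2)

lemma Z_pos (W : Torus n → ℝ) (hWm : Measurable W) (C : ℝ) (hWb : ∀ x, |W x| ≤ C) :
    0 < ∫ x, Real.exp (W x) := by
  have h1 : ∫ _x : Torus n, (Real.exp (-C) : ℝ) = Real.exp (-C) := by simp
  calc (0:ℝ) < Real.exp (-C) := Real.exp_pos _
    _ = ∫ _x : Torus n, Real.exp (-C) := h1.symm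
    _ ≤ ∫ x, Real.exp (W x) := by
        refine integral_mono (integrable_const _) (exp_int W hWm C hWb) fun x => ?_
        exact Real.exp_le_exp.mpr ((abs_le.1 (hWb x)).1)

/-- Upper bound in the Gibbs variational principle. -/
lemma gibbs_upper (W : Torus n → ℝ) (hWm : Measurable W) (C : ℝ) (hWb : ∀ x, |W x| ≤ C)
    (ρ : Measure (Torus n)) [IsProbabilityMeasure ρ] (hρa : entAdmissible ρ) :
    (∫ x, W x ∂ρ) - Hent ρ ≤ Real.log (∫ x, Real.exp (W x)) := by
  set Z : ℝ := ∫ x, Real.exp (W x) with hZdef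
  have hZ : 0 < Z := Z_pos W hWm C hWb
  set d : Torus n → ℝ := density ρ with hd
  have hdm : Measurable d := (Measure.measurable_rnDeriv ρ volume).ennreal_toReal
  have hdnn : ∀ x, 0 ≤ d x := fun x => ENNReal.toReal_nonneg
  have hdint : Integrable d (volume : Measure (Torus n)) := Measure.integrable_toReal_rnDeriv
  have hdone : ∫ x, d x = 1 := by
    rw [hd]
    simpa [density] using Measure.integral_toReal_rnDeriv hρa.1
  set γ : Torus n → ℝ := fun x => Real.exp (W x) / Z with hγ
  have hγm : Measurable γ := (Real.measurable_exp.comp hWm).div_const Z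
  have hγpos : ∀ x, 0 < γ x := fun x => div_pos (Real.exp_pos _) hZ
  have hγb : ∀ x, |γ x| ≤ Real.exp C / Z := fun x => by
    rw [abs_of_pos (hγpos x)]
    show Real.exp (W x) / Z ≤ Real.exp C / Z
    gcongr
    exact (abs_le.1 (hWb x)).2
  have hγint : Integrable γ (volume : Measure (Torus n)) :=
    integrable_of_bdd hγm.aestronglyMeasurable hγb
  have hγone : ∫ x, γ x = 1 := by
    have h1 : ∫ x, γ x = (∫ x, Real.exp (W x)) / Z := by
      simp only [hγ]
      exact integral_div Z _
    rw [h1, ← hZdef, div_self hZ.ne']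
  have hWρint : Integrable (fun x => d x * W x) (volume : Measure (Torus n)) := by
    refine (hdint.const_mul C).mono' (hdm.mul hWm).aestronglyMeasurable
      (ae_of_all _ fun x => ?_)
    have h := mul_le_mul_of_nonneg_left (hWb x) (hdnn x)
    calc ‖d x * W x‖ = d x * |W x| := by
          rw [Real.norm_eq_abs, abs_mul, abs_of_nonneg (hdnn x)]
      _ ≤ d x * C := h
      _ = C * d x := mul_comm _ _
  have hdlogint : Integrable (fun x => d x * Real.log (d x)) (volume : Measure (Torus n)) :=
    hρa.2
  have key : ∀ x, d x * W x - d x * Real.log (d x) ≤ γ x - d x + d x * Real.log Z := by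
    intro x
    rcases eq_or_lt_of_le (hdnn x) with h0 | hpos
    · rw [← h0]; simpa using (hγpos x).le
    · have hlog : Real.log (γ x / d x) ≤ γ x / d x - 1 :=
        Real.log_le_sub_one_of_pos (div_pos (hγpos x) hpos)
      have hlogd : Real.log (γ x / d x) = Real.log (γ x) - Real.log (d x) :=
        Real.log_div (hγpos x).ne' hpos.ne'
      have hlogγ : Real.log (γ x) = W x - Real.log Z := by
        show Real.log (Real.exp (W x) / Z) = W x - Real.log Z
        rw [Real.log_div (Real.exp_ne_zero _) hZ.ne', Real.log_exp]
      have h2 := mul_le_mul_of_nonneg_left hlog hpos.le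
      rw [hlogd, hlogγ] at h2
      have h3 : d x * (γ x / d x - 1) = γ x - d x := by field_simp
      rw [h3] at h2
      have h4 : d x * (W x - Real.log Z - Real.log (d x))
          = d x * W x - d x * Real.log Z - d x * Real.log (d x) := by ring
      rw [h4] at h2
      linarith
  have hlhs : Integrable (fun x => d x * W x - d x * Real.log (d x))
      (volume : Measure (Torus n)) := hWρint.sub hdlogint
  have h5 : Integrable (fun x => γ x - d x) (volume : Measure (Torus n)) := hγint.sub hdint
  have h6 : Integrable (fun x => d x * Real.log Z) (volume : Measure (Torus n)) :=
    hdint.mul_const _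
  have hrhs : Integrable (fun x => γ x - d x + d x * Real.log Z)
      (volume : Measure (Torus n)) := h5.add h6
  have hmono := integral_mono hlhs hrhs key
  rw [integral_sub hWρint hdlogint, integral_add h5 h6,
      integral_sub hγint hdint, integral_mul_const, hγone, hdone] at hmono
  have hWrep : ∫ x, W x ∂ρ = ∫ x, d x * W x := by
    rw [← integral_rnDeriv_smul hρa.1]
    simp only [smul_eq_mul]
    rfl
  have hHrep : Hent ρ = ∫ x, d x * Real.log (d x) := rfl
  rw [hWrep, hHrep]
  linarith

/-- Attainment in the Gibbs variational principle. -/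
lemma gibbs_exists (W : Torus n → ℝ) (hWm : Measurable W) (C : ℝ) (hWb : ∀ x, |W x| ≤ C) :
    ∃ g : Measure (Torus n), IsProbabilityMeasure g ∧ entAdmissible g ∧
      (∫ x, W x ∂g) - Hent g = Real.log (∫ x, Real.exp (W x)) := by
  set Z : ℝ := ∫ x, Real.exp (W x) with hZdef
  have hZ : 0 < Z := Z_pos W hWm C hWb
  set γ : Torus n → ℝ := fun x => Real.exp (W x) / Z with hγ
  have hγm : Measurable γ := (Real.measurable_exp.comp hWm).div_const Z
  have hγpos : ∀ x, 0 < γ x := fun x => div_pos (Real.exp_pos _) hZ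
  have hγb : ∀ x, |γ x| ≤ Real.exp C / Z := fun x => by
    rw [abs_of_pos (hγpos x)]
    show Real.exp (W x) / Z ≤ Real.exp C / Z
    gcongr
    exact (abs_le.1 (hWb x)).2
  have hγlo : ∀ x, Real.exp (-C) / Z ≤ γ x := fun x => by
    show Real.exp (-C) / Z ≤ Real.exp (W x) / Z
    gcongr
    exact (abs_le.1 (hWb x)).1
  have hγint : Integrable γ (volume : Measure (Torus n)) :=
    integrable_of_bdd hγm.aestronglyMeasurable hγb
  have hγone : ∫ x, γ x = 1 := by
    have h1 : ∫ x, γ x = (∫ x, Real.exp (W x)) / Z := by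
      simp only [hγ]
      exact integral_div Z _
    rw [h1, ← hZdef, div_self hZ.ne']
  have hlogγ : ∀ x, Real.log (γ x) = W x - Real.log Z := fun x => by
    show Real.log (Real.exp (W x) / Z) = W x - Real.log Z
    rw [Real.log_div (Real.exp_ne_zero _) hZ.ne', Real.log_exp]
  set g : Measure (Torus n) := volume.withDensity (fun x => ENNReal.ofReal (γ x)) with hg
  have hgac : g ≪ (volume : Measure (Torus n)) := withDensity_absolutelyContinuous _ _
  have hprob : IsProbabilityMeasure g := by
    constructor
    rw [hg, withDensity_apply _ MeasurableSet.univ, setLIntegral_univ,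
      ← ofReal_integral_eq_lintegral_ofReal hγint (ae_of_all _ fun x => (hγpos x).le), hγone]
    simp
  haveI := hprob
  have hdg : density g =ᶠ[ae (volume : Measure (Torus n))] γ := by
    filter_upwards [Measure.rnDeriv_withDensity volume hγm.ennreal_ofReal] with x hx
    show (g.rnDeriv volume x).toReal = γ x
    rw [hg, hx, ENNReal.toReal_ofReal (hγpos x).le]
  -- bound for γ log γ
  set B : ℝ := max |Real.log (Real.exp (-C) / Z)| |Real.log (Real.exp C / Z)| with hB
  have hlogb : ∀ x, |Real.log (γ x)| ≤ B := fun x => by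
    rw [abs_le]
    constructor
    · calc -B ≤ -|Real.log (Real.exp (-C) / Z)| := by
            simp only [neg_le_neg_iff, hB]; exact le_max_left _ _
        _ ≤ Real.log (Real.exp (-C) / Z) := neg_abs_le _
        _ ≤ Real.log (γ x) := Real.log_le_log (div_pos (Real.exp_pos _) hZ) (hγlo x)
    · calc Real.log (γ x) ≤ Real.log (Real.exp C / Z) :=
            Real.log_le_log (hγpos x) ((abs_le.1 (hγb x)).2)
        _ ≤ |Real.log (Real.exp C / Z)| := le_abs_self _
        _ ≤ B := le_max_right _ _
  have hγlogint : Integrable (fun x => γ x * Real.log (γ x)) (volume : Measure (Torus n)) := by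
    refine integrable_of_bdd (hγm.mul (Real.measurable_log.comp hγm)).aestronglyMeasurable
      (C := (Real.exp C / Z) * B) (fun x => ?_)
    rw [abs_mul]
    exact mul_le_mul ((hγb x)) (hlogb x) (abs_nonneg _) (le_trans (abs_nonneg _) (hγb x))
  have hent : entAdmissible g := by
    refine ⟨hgac, ?_⟩
    refine hγlogint.congr ?_
    filter_upwards [hdg] with x hx
    rw [hx]
  have hγWint : Integrable (fun x => γ x * W x) (volume : Measure (Torus n)) := by
    refine integrable_of_bdd (hγm.mul hWm).aestronglyMeasurable
      (C := (Real.exp C / Z) * C) (fun x => ?_)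
    rw [abs_mul]
    exact mul_le_mul (hγb x) (hWb x) (abs_nonneg _) (le_trans (abs_nonneg _) (hγb x))
  have hWg : ∫ x, W x ∂g = ∫ x, γ x * W x := by
    rw [← integral_rnDeriv_smul hgac]
    refine integral_congr_ae ?_
    filter_upwards [hdg] with x hx
    show (g.rnDeriv volume x).toReal • W x = γ x * W x
    rw [smul_eq_mul]
    exact congrArg (· * W x) hx
  have hHg : Hent g = ∫ x, γ x * Real.log (γ x) := by
    rw [Hent]
    refine integral_congr_ae ?_
    filter_upwards [hdg] with x hx
    rw [hx]
  have hcomp : ∫ x, γ x * Real.log (γ x) = (∫ x, γ x * W x) - Real.log Z := by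
    have : ∀ x, γ x * Real.log (γ x) = γ x * W x - γ x * Real.log Z := fun x => by
      rw [hlogγ x]; ring
    rw [integral_congr_ae (ae_of_all _ this), integral_sub hγWint (hγint.mul_const _),
      integral_mul_const, hγone, one_mul]
  refine ⟨g, hprob, hent, ?_⟩
  rw [hWg, hHg, hcomp]
  ring


lemma sup_part (f : Torus n → Torus n → ℝ)
    (hf : Continuous fun p : Torus n × Torus n => f p.1 p.2)
    (μ : Measure (Torus n)) [IsProbabilityMeasure μ] (hμH : entAdmissible μ) :
    (⨆ ν' ∈ {m : Measure (Torus n) | IsProbabilityMeasure m}, Fval f μ ν')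
      = ((Hent μ + Real.log (∫ y, Real.exp (∫ x, f x y ∂μ)) : ℝ) : EReal) := by
  obtain ⟨C, hC⟩ := exists_bound f hf
  have hfm : StronglyMeasurable (Function.uncurry f) := hf.stronglyMeasurable
  have hUm : Measurable (fun y => ∫ x, f x y ∂μ) := by
    have h := hfm.integral_prod_left' (μ := μ)
    exact h.measurable
  have hUb : ∀ y, |∫ x, f x y ∂μ| ≤ C := fun y => by
    have h := norm_integral_le_of_norm_le_const (μ := μ) (f := fun x => f x y) (C := C)
      (ae_of_all _ fun x => by simpa using hC x y)
    simpa using h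
  have hswap : ∀ (ν' : Measure (Torus n)), IsProbabilityMeasure ν' →
      ∫ x, ∫ y, f x y ∂ν' ∂μ = ∫ y, (∫ x, f x y ∂μ) ∂ν' := by
    intro ν' hν'
    haveI := hν'
    refine integral_integral_swap ?_
    exact integrable_of_bdd hfm.aestronglyMeasurable (C := C) fun p => hC p.1 p.2
  apply le_antisymm
  · refine iSup₂_le fun ν' hν' => ?_
    haveI : IsProbabilityMeasure ν' := hν'
    by_cases ha : entAdmissible ν'
    · unfold Fval
      rw [if_pos hμH, if_pos ha, EReal.coe_le_coe_iff]
      have h := gibbs_upper _ hUm C hUb ν' ha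
      rw [hswap ν' ‹_›]
      linarith
    · unfold Fval
      rw [if_pos hμH, if_neg ha]
      exact bot_le
  · obtain ⟨g, hg1, hg2, hg3⟩ := gibbs_exists _ hUm C hUb
    refine le_iSup₂_of_le g hg1 ?_
    unfold Fval
    rw [if_pos hμH, if_pos hg2, EReal.coe_le_coe_iff, hswap g hg1]
    linarith

lemma inf_part (f : Torus n → Torus n → ℝ)
    (hf : Continuous fun p : Torus n × Torus n => f p.1 p.2)
    (ν : Measure (Torus n)) [IsProbabilityMeasure ν] (hνH : entAdmissible ν) :
    (⨅ μ' ∈ {m : Measure (Torus n) | IsProbabilityMeasure m}, Fval f μ' ν)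
      = ((-Real.log (∫ x, Real.exp (-∫ y, f x y ∂ν)) - Hent ν : ℝ) : EReal) := by
  obtain ⟨C, hC⟩ := exists_bound f hf
  have hfm : StronglyMeasurable (Function.uncurry f) := hf.stronglyMeasurable
  have hVm : Measurable (fun x => -∫ y, f x y ∂ν) := by
    have h := hfm.integral_prod_right' (ν := ν)
    exact h.measurable.neg
  have hVb : ∀ x, |(-∫ y, f x y ∂ν)| ≤ C := fun x => by
    rw [abs_neg]
    have h := norm_integral_le_of_norm_le_const (μ := ν) (f := fun y => f x y) (C := C)
      (ae_of_all _ fun y => by simpa using hC x y)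
    simpa using h
  apply le_antisymm
  · obtain ⟨g, hg1, hg2, hg3⟩ := gibbs_exists _ hVm C hVb
    refine iInf₂_le_of_le g hg1 ?_
    unfold Fval
    rw [if_pos hg2, if_pos hνH, EReal.coe_le_coe_iff]
    rw [integral_neg] at hg3
    linarith
  · refine le_iInf₂ fun μ' hμ' => ?_
    haveI : IsProbabilityMeasure μ' := hμ'
    by_cases ha : entAdmissible μ'
    · unfold Fval
      rw [if_pos ha, if_pos hνH, EReal.coe_le_coe_iff]
      have h := gibbs_upper _ hVm C hVb μ' ha
      rw [integral_neg] at h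
      linarith
    · unfold Fval
      rw [if_neg ha]
      exact le_top

end NIaux

theorem stmt2 (n : ℕ) (f : Torus n → Torus n → ℝ)
    (hf : Continuous fun p : Torus n × Torus n => f p.1 p.2)
    (μ ν : Measure (Torus n))
    (hμ : IsProbabilityMeasure μ) (hν : IsProbabilityMeasure ν)
    (hμH : entAdmissible μ) (hνH : entAdmissible ν) :
    NIval f μ ν
      = ((Hent μ + Hent ν
          + Real.log (∫ y, Real.exp (∫ x, f x y ∂μ))
          + Real.log (∫ x, Real.exp (-∫ y, f x y ∂ν)) : ℝ) : EReal) := by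
  haveI := hμ; haveI := hν
  unfold NIval
  rw [NIaux.sup_part f hf μ hμH, NIaux.inf_part f hf ν hνH, ← EReal.coe_sub]
  exact EReal.coe_eq_coe_iff.mpr (by ring)
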